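/- Let S = ((X,d), (f_i)_{i∈{1,…,n}}) be an iterated function system with n ≥ 2, where each f_i satisfies d(f_i(x), f_i(y)) ≤ c_i·d(x,y) for all x,y ∈ X with c_i ∈ [0,1). Let γ_i be the unique fixed point of f_i, M = max_{i,j} d(γ_i, γ_j), let i' realize max{c_1,…,c_n} and i'' ∈ {1,…,n}\{i'} realize max{c_i : i ≠ i'}. Then the attractor A_S satisfies A_S ⊆ (⋃_{i∈{1,…,n}\{i'}} B[γ_i, M·c_i·(1 + c_{i'})/(1 − c_{i'}·c_{i''})]) ∪ B[γ_{i'}, M·c_{i'}·(1 + c_{i''})/(1 − c_{i'}·c_{i''})]. -/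
import Mathlib


/-- If `S = ((X,d), (f_i)_{i ∈ {1,…,n}})` is an IFS with `n ≥ 2`, each `f_i` satisfying
`d(f_i x, f_i y) ≤ c_i d(x,y)` with `c_i ∈ [0,1)`, `γ_i` the fixed point of `f_i`,
`M = max_{i,j} d(γ_i, γ_j)`, `i'` maximizing `c` and `i'' ≠ i'` maximizing `c` over the
remaining indices, then the attractor `A` (the nonempty compact set with
`A = ⋃ i, f_i(A)`) satisfies
`A ⊆ (⋃_{i ≠ i'} B[γ_i, M c_i (1+c_{i'})/(1−c_{i'}c_{i''})]) ∪
B[γ_{i'}, M c_{i'} (1+c_{i''})/(1−c_{i'}c_{i''})]`. -/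
theorem attractor_subset_explicit_cover
    {X : Type*} [MetricSpace X] [CompleteSpace X]
    {n : ℕ} (hn : 2 ≤ n)
    (f : Fin n → X → X) (c : Fin n → ℝ)
    (hc0 : ∀ i, 0 ≤ c i) (hc1 : ∀ i, c i < 1)
    (hlip : ∀ i, ∀ x y : X, dist (f i x) (f i y) ≤ c i * dist x y)
    (γ : Fin n → X) (hγ : ∀ i, f i (γ i) = γ i)
    (M : ℝ)
    (hM : M = Finset.univ.sup'
      ⟨(⟨0, by omega⟩, ⟨0, by omega⟩), Finset.mem_univ _⟩
      (fun p : Fin n × Fin n => dist (γ p.1) (γ p.2)))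
    (i' i'' : Fin n) (hne : i'' ≠ i')
    (hi' : ∀ i, c i ≤ c i') (hi'' : ∀ i, i ≠ i' → c i ≤ c i'')
    (A : Set X) (hA : IsCompact A) (hAne : A.Nonempty)
    (hself : A = ⋃ i, f i '' A) :
    A ⊆ (⋃ i ∈ ({i : Fin n | i ≠ i'}),
        Metric.closedBall (γ i) (M * c i * (1 + c i') / (1 - c i' * c i''))) ∪
      Metric.closedBall (γ i') (M * c i' * (1 + c i'') / (1 - c i' * c i'')) := by
  classical
  have hD : 0 < 1 - c i' * c i'' := by nlinarith [hc0 i', hc0 i'', hc1 i', hc1 i'']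
  have hMd : ∀ i j, dist (γ i) (γ j) ≤ M := by
    intro i j
    rw [hM]
    exact Finset.le_sup' (fun p : Fin n × Fin n => dist (γ p.1) (γ p.2)) (Finset.mem_univ (i, j))
  have hM0 : 0 ≤ M := le_trans dist_nonneg (hMd i' i')
  set r : Fin n → ℝ := fun i =>
    if i = i' then M * c i' * (1 + c i'') / (1 - c i' * c i'')
    else M * c i * (1 + c i') / (1 - c i' * c i'') with hr
  have hr0 : ∀ i, 0 ≤ r i := by
    intro i
    simp only [hr]
    split
    · exact div_nonneg (mul_nonneg (mul_nonneg hM0 (hc0 i')) (by linarith [hc0 i''])) hD.le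
    · exact div_nonneg (mul_nonneg (mul_nonneg hM0 (hc0 i)) (by linarith [hc0 i'])) hD.le
  have hrle : ∀ j, r j ≤ M * c i' * (1 + c i'') / (1 - c i' * c i'') := by
    intro j
    simp only [hr]
    split
    · exact le_rfl
    · rename_i hj
      rw [div_le_div_iff₀ hD hD]
      nlinarith [mul_nonneg (mul_nonneg hM0 hD.le) (sub_nonneg.2 (hi'' j hj)),
        mul_nonneg (mul_nonneg hM0 hD.le) (sub_nonneg.2 (hi' i'')), hc0 i', hc0 j, hc0 i'']
  set B : Set X := ⋃ i, Metric.closedBall (γ i) (r i) with hB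
  have hBne : B.Nonempty := ⟨γ i', Set.mem_iUnion.2 ⟨i', Metric.mem_closedBall_self (hr0 i')⟩⟩
  have hBclosed : IsClosed B := isClosed_iUnion_of_finite (fun i => Metric.isClosed_closedBall)
  have hinv : ∀ i, ∀ y ∈ B, f i y ∈ Metric.closedBall (γ i) (r i) := by
    intro i y hy
    obtain ⟨j, hyj⟩ := Set.mem_iUnion.1 hy
    rw [Metric.mem_closedBall] at hyj ⊢
    have h1 : dist (f i y) (γ i) ≤ c i * dist y (γ i) := by
      conv_lhs => rw [← hγ i]
      exact hlip i y (γ i)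
    by_cases hij : i = j
    · subst hij
      calc dist (f i y) (γ i) ≤ c i * dist y (γ i) := h1
        _ ≤ 1 * r i := mul_le_mul (le_of_lt (hc1 i)) hyj dist_nonneg zero_le_one
        _ = r i := one_mul _
    · have h2 : dist y (γ i) ≤ r j + M :=
        le_trans (dist_triangle y (γ j) (γ i)) (add_le_add hyj (hMd j i))
      have h3 : dist (f i y) (γ i) ≤ c i * (r j + M) :=
        le_trans h1 (mul_le_mul_of_nonneg_left h2 (hc0 i))
      by_cases hii : i = i'
      · rw [hii] at h3 hij ⊢
        have hji : j ≠ i' := fun h => hij h.symm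
        have hrj : r j ≤ M * c i'' * (1 + c i') / (1 - c i' * c i'') := by
          simp only [hr, if_neg hji]
          rw [div_le_div_iff₀ hD hD]
          nlinarith [mul_nonneg (mul_nonneg hM0 hD.le) (sub_nonneg.2 (hi'' j hji)), hc0 i', hc0 j, hc0 i'']
        have hri : r i' = M * c i' * (1 + c i'') / (1 - c i' * c i'') := by
          simp only [hr, if_pos rfl]
        rw [hri]
        have : c i' * (M * c i'' * (1 + c i') / (1 - c i' * c i'') + M)
            ≤ M * c i' * (1 + c i'') / (1 - c i' * c i'') := by
          rw [div_add' _ _ _ (ne_of_gt hD), ← mul_div_assoc, div_le_div_iff₀ hD hD]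
          nlinarith [hc0 i', hc0 i'', hM0]
        calc dist (f i' y) (γ i') ≤ c i' * (r j + M) := h3
          _ ≤ c i' * (M * c i'' * (1 + c i') / (1 - c i' * c i'') + M) :=
            mul_le_mul_of_nonneg_left (by linarith) (hc0 i')
          _ ≤ M * c i' * (1 + c i'') / (1 - c i' * c i'') := this
      · have hri : r i = M * c i * (1 + c i') / (1 - c i' * c i'') := by
          simp only [hr, if_neg hii]
        rw [hri]
        have : c i * (M * c i' * (1 + c i'') / (1 - c i' * c i'') + M)
            ≤ M * c i * (1 + c i') / (1 - c i' * c i'') := by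
          rw [div_add' _ _ _ (ne_of_gt hD), ← mul_div_assoc, div_le_div_iff₀ hD hD]
          nlinarith [hc0 i, hc0 i', hc0 i'', hM0]
        calc dist (f i y) (γ i) ≤ c i * (r j + M) := h3
          _ ≤ c i * (M * c i' * (1 + c i'') / (1 - c i' * c i'') + M) :=
            mul_le_mul_of_nonneg_left (by linarith [hrle j]) (hc0 i)
          _ ≤ M * c i * (1 + c i') / (1 - c i' * c i'') := this
  have hsub : A ⊆ B := by
    obtain ⟨a₀, ha₀, hmax⟩ := hA.exists_isMaxOn hAne
      ((Metric.continuous_infDist_pt B).continuousOn)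
    have h0 : Metric.infDist a₀ B ≤ 0 := by
      by_contra hpos
      push_neg at hpos
      have ha₀' : a₀ ∈ ⋃ i, f i '' A := hself ▸ ha₀
      obtain ⟨i, hi⟩ := Set.mem_iUnion.1 ha₀'
      obtain ⟨b, hb, hfb⟩ := hi
      have key : Metric.infDist a₀ B ≤ c i' * Metric.infDist b B := by
        refine le_of_forall_pos_le_add (fun ε hε => ?_)
        obtain ⟨y, hyB, hy⟩ := (Metric.infDist_lt_iff hBne).1
          (lt_add_of_pos_right (Metric.infDist b B) hε)
        have hfy : f i y ∈ B := Set.mem_iUnion.2 ⟨i, hinv i y hyB⟩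
        calc Metric.infDist a₀ B ≤ dist a₀ (f i y) := Metric.infDist_le_dist_of_mem hfy
          _ = dist (f i b) (f i y) := by rw [hfb]
          _ ≤ c i * dist b y := hlip i b y
          _ ≤ c i' * dist b y := mul_le_mul_of_nonneg_right (hi' i) dist_nonneg
          _ ≤ c i' * (Metric.infDist b B + ε) :=
            mul_le_mul_of_nonneg_left hy.le (hc0 i')
          _ ≤ c i' * Metric.infDist b B + ε := by
            nlinarith [hc1 i', hc0 i', hε]
      have hble : Metric.infDist b B ≤ Metric.infDist a₀ B := hmax hb
      nlinarith [hc1 i', hc0 i', Metric.infDist_nonneg (x := b) (s := B)]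
    intro a ha
    have : Metric.infDist a B = 0 :=
      le_antisymm (le_trans (hmax ha) h0) Metric.infDist_nonneg
    exact (hBclosed.mem_iff_infDist_zero hBne).2 this
  intro a ha
  obtain ⟨j, hj⟩ := Set.mem_iUnion.1 (hsub ha)
  by_cases hji : j = i'
  · subst hji
    right
    simpa only [hr, if_pos rfl] using hj
  · left
    refine Set.mem_biUnion (show j ∈ {i : Fin n | i ≠ i'} from hji) ?_
    simpa only [hr, if_neg hji] using hj
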